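/- Let p be prime, 𝔽 a field of characteristic p, and A ⊆ ℤ/pℤ with |A| = m ≥ 1. Then the uncertainty number u_𝔽(A) = min{ rank T_f : f ∈ 𝔽[ℤ/pℤ], f ≠ 0, supp(f) ⊆ A } equals p - m + 1, where T_f : 𝔽[ℤ/pℤ] → 𝔽[ℤ/pℤ] is multiplication by f. -/

import Mathlib

set_option linter.unusedSectionVars false

open MonoidAlgebra Finset

section
variable (p : ℕ) [Fact p.Prime] (𝔽 : Type) [Field 𝔽] [CharP 𝔽 p]

noncomputable def Xe (a : ZMod p) : MonoidAlgebra 𝔽 (Multiplicative (ZMod p)) :=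
  MonoidAlgebra.single (Multiplicative.ofAdd a) 1

lemma Xe_mul (a b : ZMod p) : Xe p 𝔽 a * Xe p 𝔽 b = Xe p 𝔽 (a + b) := by
  simp [Xe, MonoidAlgebra.single_mul_single]

lemma Xe_zero : Xe p 𝔽 0 = 1 := rfl

lemma Xe_pow (n : ℕ) (a : ZMod p) : Xe p 𝔽 a ^ n = Xe p 𝔽 ((n : ZMod p) * a) := by
  simp only [Xe, MonoidAlgebra.single_pow, one_pow]
  congr 1
  rw [← ofAdd_nsmul]
  congr 1
  simp [nsmul_eq_mul]

instance : CharP (MonoidAlgebra 𝔽 (Multiplicative (ZMod p))) p :=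
  charP_of_injective_algebraMap (algebraMap 𝔽 _).injective p

noncomputable def tE : MonoidAlgebra 𝔽 (Multiplicative (ZMod p)) := Xe p 𝔽 1 - 1

lemma tE_pow_p : tE p 𝔽 ^ p = 0 := by
  have hp : p.Prime := Fact.out
  haveI : ExpChar (MonoidAlgebra 𝔽 (Multiplicative (ZMod p))) p := ExpChar.prime hp
  rw [tE, sub_pow_char, Xe_pow, one_pow]
  simp [ZMod.natCast_self, Xe_zero]

lemma tE_pow_eq_zero {n : ℕ} (hn : p ≤ n) : tE p 𝔽 ^ n = 0 := by
  rw [← Nat.sub_add_cancel hn, pow_add, tE_pow_p, mul_zero]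

end

section
variable (p : ℕ) [Fact p.Prime] (𝔽 : Type) [Field 𝔽] [CharP 𝔽 p]

noncomputable def Bb : Module.Basis (Multiplicative (ZMod p)) 𝔽 (MonoidAlgebra 𝔽 (Multiplicative (ZMod p))) :=
  MonoidAlgebra.basis _ 𝔽

lemma Bb_apply (g : Multiplicative (ZMod p)) : Bb p 𝔽 g = Xe p 𝔽 (Multiplicative.toAdd g) := by
  rfl

instance : Module.Finite 𝔽 (MonoidAlgebra 𝔽 (Multiplicative (ZMod p))) :=
  Module.Finite.of_basis (Bb p 𝔽)

lemma finrank_R : Module.finrank 𝔽 (MonoidAlgebra 𝔽 (Multiplicative (ZMod p))) = p := by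
  rw [Module.finrank_eq_card_basis (Bb p 𝔽)]
  simp [ZMod.card]

lemma Xe_eq_sum (a : ZMod p) :
    Xe p 𝔽 a = ∑ i ∈ Finset.range p, (a.val.choose i : 𝔽) • tE p 𝔽 ^ i := by
  have h1 : Xe p 𝔽 a = (tE p 𝔽 + 1) ^ a.val := by
    rw [tE, sub_add_cancel, Xe_pow]
    congr 1
    simp [ZMod.natCast_val, ZMod.cast_id]
  rw [h1, add_pow, ← Finset.sum_subset (Finset.range_subset_range.2 a.val_lt)
      (fun i _ hi => by
        simp only [Finset.mem_range, not_lt] at hi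
        rw [Nat.choose_eq_zero_of_lt hi, Nat.cast_zero, zero_smul])]
  apply Finset.sum_congr rfl
  intro i _
  simp [Algebra.smul_def, mul_comm]

noncomputable def Cb : Module.Basis (Fin p) 𝔽 (MonoidAlgebra 𝔽 (Multiplicative (ZMod p))) :=
  basisOfTopLeSpanOfCardEqFinrank (fun i : Fin p => tE p 𝔽 ^ (i : ℕ))
    (by
      rw [← (Bb p 𝔽).span_eq, Submodule.span_le]
      rintro x ⟨g, rfl⟩
      rw [Bb_apply, Xe_eq_sum]
      apply Submodule.sum_mem
      intro i hi
      apply Submodule.smul_mem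
      apply Submodule.subset_span
      exact ⟨⟨i, Finset.mem_range.1 hi⟩, rfl⟩)
    (by simp [finrank_R])

lemma Cb_apply (i : Fin p) : Cb p 𝔽 i = tE p 𝔽 ^ (i : ℕ) := by
  rw [Cb, coe_basisOfTopLeSpanOfCardEqFinrank]

end
section
variable (p : ℕ) [Fact p.Prime] (𝔽 : Type) [Field 𝔽] [CharP 𝔽 p]
variable (t : MonoidAlgebra 𝔽 (Multiplicative (ZMod p)))
variable (Cb : Module.Basis (Fin p) 𝔽 (MonoidAlgebra 𝔽 (Multiplicative (ZMod p))))

noncomputable def cc (f : MonoidAlgebra 𝔽 (Multiplicative (ZMod p))) (i : ℕ) : 𝔽 :=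
  if h : i < p then Cb.repr f ⟨i, h⟩ else 0

lemma sum_repr (hC : ∀ i : Fin p, Cb i = t ^ (i : ℕ))
    (f : MonoidAlgebra 𝔽 (Multiplicative (ZMod p))) :
    f = ∑ i ∈ range p, cc p 𝔽 Cb f i • t ^ i := by
  conv_lhs => rw [← Cb.sum_repr f]
  rw [← Fin.sum_univ_eq_sum_range (fun i => cc p 𝔽 Cb f i • t ^ i)]
  apply Finset.sum_congr rfl
  intro i _
  rw [hC, cc]
  simp

lemma exists_cc_ne (f : MonoidAlgebra 𝔽 (Multiplicative (ZMod p))) (hf : f ≠ 0) :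
    ∃ i, cc p 𝔽 Cb f i ≠ 0 := by
  by_contra h
  push_neg at h
  apply hf
  have : Cb.repr f = 0 := by
    ext i
    have := h i.1
    rw [cc] at this
    simpa [i.2] using this
  simpa using congrArg Cb.repr.symm this

lemma factor (hC : ∀ i : Fin p, Cb i = t ^ (i : ℕ)) (ht : t ^ p = 0)
    (f : MonoidAlgebra 𝔽 (Multiplicative (ZMod p))) (hf : f ≠ 0) :
    ∃ v, v < p ∧ cc p 𝔽 Cb f v ≠ 0 ∧ (∀ i, i < v → cc p 𝔽 Cb f i = 0) ∧
      ∃ u, IsUnit u ∧ f = t ^ v * u := by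
  classical
  have hex := exists_cc_ne p 𝔽 Cb f hf
  set v := Nat.find hex with hvdef
  have hv : cc p 𝔽 Cb f v ≠ 0 := Nat.find_spec hex
  have hlt : ∀ i, i < v → cc p 𝔽 Cb f i = 0 := fun i hi => not_not.1 (Nat.find_min hex hi)
  have hvp : v < p := by
    by_contra h
    push_neg at h
    apply hv
    rw [cc, dif_neg (not_lt.2 h)]
  refine ⟨v, hvp, hv, hlt, ?_⟩
  set u := ∑ j ∈ range (p - v), cc p 𝔽 Cb f (v + j) • t ^ j with hu
  have hfu : f = t ^ v * u := by
    have e1 : f = ∑ i ∈ Ico v p, cc p 𝔽 Cb f i • t ^ i := by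
      conv_lhs => rw [sum_repr p 𝔽 t Cb hC f]
      rw [range_eq_Ico, ← Finset.sum_Ico_consecutive _ (Nat.zero_le v) hvp.le,
        Finset.sum_eq_zero (fun i hi => by rw [hlt i (mem_Ico.1 hi).2, zero_smul]), zero_add]
    rw [e1, Finset.sum_Ico_eq_sum_range, hu, Finset.mul_sum]
    apply Finset.sum_congr rfl
    intro j _
    rw [mul_smul_comm, pow_add]
  have hunit : IsUnit u := by
    have hpv : p - v = (p - v - 1) + 1 := by omega
    rw [hu, hpv, Finset.sum_range_succ']
    simp only [add_zero, pow_zero]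
    have hnil : IsNilpotent (∑ k ∈ range (p - v - 1), cc p 𝔽 Cb f (v + (k + 1)) • t ^ (k + 1)) := by
      have e2 : (∑ k ∈ range (p - v - 1), cc p 𝔽 Cb f (v + (k + 1)) • t ^ (k + 1))
          = t * ∑ k ∈ range (p - v - 1), cc p 𝔽 Cb f (v + (k + 1)) • t ^ k := by
        rw [Finset.mul_sum]
        apply Finset.sum_congr rfl
        intro k _
        rw [mul_smul_comm, pow_succ, mul_comm (t ^ k) t]
      rw [e2]
      exact ⟨p, by rw [mul_pow, ht, zero_mul]⟩
    have hone : IsUnit (cc p 𝔽 Cb f v • (1 : MonoidAlgebra 𝔽 (Multiplicative (ZMod p)))) := by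
      rw [← Algebra.algebraMap_eq_smul_one]
      exact (isUnit_iff_ne_zero.2 hv).map (algebraMap 𝔽 _)
    exact hnil.isUnit_add_right_of_commute hone (Commute.all _ _)
  exact ⟨u, hunit, hfu⟩

end
section
variable (p : ℕ) [Fact p.Prime] (𝔽 : Type) [Field 𝔽] [CharP 𝔽 p]
variable (t : MonoidAlgebra 𝔽 (Multiplicative (ZMod p)))
variable (Cb : Module.Basis (Fin p) 𝔽 (MonoidAlgebra 𝔽 (Multiplicative (ZMod p))))

lemma range_mulLeft_eq_span (g : MonoidAlgebra 𝔽 (Multiplicative (ZMod p))) :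
    LinearMap.range (LinearMap.mulLeft 𝔽 g) =
      Submodule.span 𝔽 (Set.range fun i : Fin p => g * Cb i) := by
  rw [LinearMap.range_eq_map, ← Cb.span_eq, Submodule.map_span, ← Set.range_comp]
  rfl

lemma tpow_zero (ht : t ^ p = 0) {n : ℕ} (hn : p ≤ n) : t ^ n = 0 := by
  rw [← Nat.sub_add_cancel hn, pow_add, ht, mul_zero]

lemma range_mulLeft_pow (hC : ∀ i : Fin p, Cb i = t ^ (i : ℕ)) (ht : t ^ p = 0) (k : ℕ) :
    LinearMap.range (LinearMap.mulLeft 𝔽 (t ^ k)) =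
      Submodule.span 𝔽 (Cb '' {i : Fin p | k ≤ (i : ℕ)}) := by
  rw [range_mulLeft_eq_span p 𝔽 Cb (t ^ k)]
  apply le_antisymm
  · rw [Submodule.span_le]
    rintro x ⟨i, rfl⟩
    show t ^ k * Cb i ∈ _
    by_cases h : k + (i : ℕ) < p
    · have e : t ^ k * Cb i = Cb ⟨k + (i : ℕ), h⟩ := by
        rw [hC, hC, ← pow_add]
      rw [e]
      exact Submodule.subset_span ⟨⟨k + (i : ℕ), h⟩, by simp, rfl⟩
    · have e : t ^ k * Cb i = 0 := by
        rw [hC, ← pow_add, tpow_zero p 𝔽 t ht (by omega)]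
      rw [e]
      exact Submodule.zero_mem _
  · rw [Submodule.span_le]
    rintro x ⟨i, hi, rfl⟩
    have hik : k ≤ (i : ℕ) := hi
    have e : Cb i = t ^ k * Cb ⟨(i : ℕ) - k, by omega⟩ := by
      rw [hC, hC, ← pow_add]
      congr 1
      simp only [Fin.val_mk]
      omega
    rw [e]
    exact Submodule.subset_span ⟨⟨(i : ℕ) - k, by omega⟩, rfl⟩

lemma card_tail (k : ℕ) (hk : k ≤ p) :
    Fintype.card ({i : Fin p | k ≤ (i : ℕ)} : Set (Fin p)) = p - k := by
  have e : ({i : Fin p | k ≤ (i : ℕ)} : Set (Fin p)) ≃ Fin (p - k) :=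
    { toFun := fun j => ⟨(j.1 : ℕ) - k, by have h1 : (j.1 : ℕ) < p := j.1.2; have h2 : k ≤ (j.1 : ℕ) := j.2; omega⟩
      invFun := fun j => ⟨⟨k + (j : ℕ), by have := j.2; omega⟩, by simp⟩
      left_inv := fun j => by
        have h2 : k ≤ (j.1 : ℕ) := j.2
        apply Subtype.ext
        apply Fin.ext
        simp only [Fin.val_mk]
        omega
      right_inv := fun j => by
        apply Fin.ext
        simp only [Fin.val_mk]
        omega }
  rw [Fintype.card_congr e, Fintype.card_fin]

lemma finrank_span_tail (k : ℕ) (hk : k ≤ p) :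
    Module.finrank 𝔽 (Submodule.span 𝔽 (Cb '' {i : Fin p | k ≤ (i : ℕ)})) = p - k := by
  have hli : LinearIndependent 𝔽
      (fun j : ({i : Fin p | k ≤ (i : ℕ)} : Set (Fin p)) => Cb j.1) :=
    Cb.linearIndependent.comp _ Subtype.val_injective
  rw [Set.image_eq_range, finrank_span_eq_card hli, card_tail p k hk]

end
section
variable (p : ℕ) [Fact p.Prime] (𝔽 : Type) [Field 𝔽] [CharP 𝔽 p]

lemma choose_cast_eq {i : ℕ} (hi : ((i.factorial : ℕ) : 𝔽) ≠ 0) (n : ℕ) :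
    ((n.choose i : ℕ) : 𝔽) = (i.factorial : 𝔽)⁻¹ * (descPochhammer 𝔽 i).eval (n : 𝔽) := by
  rw [descPochhammer_eval_eq_descFactorial 𝔽 n i, Nat.descFactorial_eq_factorial_mul_choose,
    Nat.cast_mul, ← mul_assoc, inv_mul_cancel₀ hi, one_mul]

lemma fact_ne_zero {i : ℕ} (hi : i < p) : ((i.factorial : ℕ) : 𝔽) ≠ 0 := by
  rw [Ne, CharP.cast_eq_zero_iff 𝔽 p]
  intro hdvd
  have := (Nat.Prime.dvd_factorial Fact.out).1 hdvd
  omega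

lemma vandermonde_binomial {m : ℕ} (hmp : m ≤ p) (a : Fin m → ZMod p)
    (ha : Function.Injective a) (G : Fin m → 𝔽)
    (hG : ∀ i : Fin m, ∑ j : Fin m, G j * (((a j).val.choose (i : ℕ) : ℕ) : 𝔽) = 0) :
    G = 0 := by
  classical
  set x : Fin m → 𝔽 := fun j => (((a j).val : ℕ) : 𝔽) with hx
  have hxinj : Function.Injective x := by
    have : x = fun j => (ZMod.castHom (dvd_refl p) 𝔽) (a j) := by
      funext j
      rw [hx]
      simp [ZMod.natCast_val]
    rw [this]
    exact (ZMod.castHom (dvd_refl p) 𝔽).injective.comp ha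
  set N : Matrix (Fin m) (Fin m) 𝔽 := Matrix.of fun j i => (((a j).val.choose (i : ℕ) : ℕ) : 𝔽)
    with hN
  have hdet : N.det ≠ 0 := by
    have hfac : ∀ i : Fin m, (((i : ℕ).factorial : ℕ) : 𝔽) ≠ 0 :=
      fun i => fact_ne_zero p 𝔽 (lt_of_lt_of_le i.2 hmp)
    have hNfac : N = (Matrix.of fun j i : Fin m =>
          (descPochhammer 𝔽 (i : ℕ)).eval (x j)) * Matrix.diagonal (fun i : Fin m =>
          (((i : ℕ).factorial : ℕ) : 𝔽)⁻¹) := by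
      ext j i
      rw [Matrix.mul_diagonal, hN]
      simp only [Matrix.of_apply]
      rw [choose_cast_eq 𝔽 (hfac i), mul_comm]
    rw [hNfac, Matrix.det_mul, Matrix.det_diagonal]
    apply mul_ne_zero
    · rw [← Matrix.det_eval_matrixOfPolynomials_eq_det_vandermonde x
        (fun i : Fin m => descPochhammer 𝔽 (i : ℕ))
        (fun i => descPochhammer_natDegree (R := 𝔽) (i : ℕ))
        (fun i => monic_descPochhammer 𝔽 (i : ℕ))]
      exact Matrix.det_vandermonde_ne_zero_iff.2 hxinj
    · exact Finset.prod_ne_zero_iff.2 fun i _ => inv_ne_zero (hfac i)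
  apply Matrix.eq_zero_of_vecMul_eq_zero hdet
  funext i
  simp only [Matrix.vecMul, dotProduct, hN, Matrix.of_apply]
  exact hG i
end

section
variable (p : ℕ) [Fact p.Prime] (𝔽 : Type) [Field 𝔽] [CharP 𝔽 p]

lemma repr_Xe (a : ZMod p) (i : Fin p) :
    (Cb p 𝔽).repr (Xe p 𝔽 a) i = ((a.val.choose (i : ℕ) : ℕ) : 𝔽) := by
  have h : Xe p 𝔽 a = ∑ j : Fin p, ((a.val.choose (j : ℕ) : ℕ) : 𝔽) • Cb p 𝔽 j := by
    rw [Xe_eq_sum, ← Fin.sum_univ_eq_sum_range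
      (fun j => ((a.val.choose j : ℕ) : 𝔽) • tE p 𝔽 ^ j)]
    exact Finset.sum_congr rfl fun j _ => by rw [Cb_apply]
  rw [h, Module.Basis.repr_sum_self]

lemma repr_eq (f : MonoidAlgebra 𝔽 (Multiplicative (ZMod p))) (i : Fin p) :
    (Cb p 𝔽).repr f i =
      ∑ g ∈ f.coeff.support, f.coeff g * (((Multiplicative.toAdd g).val.choose (i : ℕ) : ℕ) : 𝔽) := by
  classical
  have hf : f = ∑ g ∈ f.coeff.support, (f.coeff g) • Xe p 𝔽 (Multiplicative.toAdd g) := by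
    conv_lhs => rw [← MonoidAlgebra.sum_coeff_single f]
    rw [Finsupp.sum]
    apply Finset.sum_congr rfl
    intro g _
    rw [Xe, MonoidAlgebra.smul_single', mul_one]
    rfl
  conv_lhs => rw [hf]
  rw [map_sum, Finsupp.finset_sum_apply]
  apply Finset.sum_congr rfl
  intro g _
  rw [map_smul, Finsupp.smul_apply, repr_Xe, smul_eq_mul]

lemma exists_small (A : Finset (ZMod p)) {m : ℕ} (hA : A.card = m)
    (f : MonoidAlgebra 𝔽 (Multiplicative (ZMod p))) (hf : f ≠ 0)
    (hsupp : ∀ x : ZMod p, f.coeff (Multiplicative.ofAdd x) ≠ 0 → x ∈ A) :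
    ∃ i, i < m ∧ cc p 𝔽 (Cb p 𝔽) f i ≠ 0 := by
  classical
  by_contra hcon
  push_neg at hcon
  have hmp : m ≤ p := by
    rw [← hA]
    calc A.card ≤ Fintype.card (ZMod p) := A.card_le_univ
    _ = p := ZMod.card p
  set e : Fin m ≃ {x // x ∈ A} := (finCongr hA.symm).trans A.equivFin.symm with he
  set a : Fin m → ZMod p := fun j => (e j : ZMod p) with ha_def
  have ha : Function.Injective a := fun j k hjk => e.injective (Subtype.ext hjk)
  set G : Fin m → 𝔽 := fun j => f.coeff (Multiplicative.ofAdd (a j)) with hG_def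
  have hsum : ∀ i : Fin p, (i : ℕ) < m →
      ∑ j : Fin m, G j * (((a j).val.choose (i : ℕ) : ℕ) : 𝔽) = 0 := by
    intro i him
    have hcc := hcon (i : ℕ) him
    rw [cc, dif_pos i.2] at hcc
    simp only [Fin.eta] at hcc
    rw [repr_eq] at hcc
    have hsub : f.coeff.support ⊆ A.image (Multiplicative.ofAdd) := by
      intro g hg
      rw [Finset.mem_image]
      exact ⟨Multiplicative.toAdd g, hsupp _ (by simpa using Finsupp.mem_support_iff.1 hg), rfl⟩
    rw [Finset.sum_subset hsub (fun g _ hg => by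
      rw [Finsupp.notMem_support_iff.1 hg, zero_mul])] at hcc
    rw [Finset.sum_image (fun x _ y _ h => by simpa using h)] at hcc
    simp only [toAdd_ofAdd] at hcc
    rw [← Finset.sum_coe_sort A (fun x => f.coeff (Multiplicative.ofAdd x) *
      (((x : ZMod p).val.choose (i : ℕ) : ℕ) : 𝔽))] at hcc
    rw [← Equiv.sum_comp e (fun x : {x // x ∈ A} => f.coeff (Multiplicative.ofAdd (x : ZMod p)) *
      (((x : ZMod p).val.choose (i : ℕ) : ℕ) : 𝔽))] at hcc
    exact hcc
  have hG0 : G = 0 := by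
    apply vandermonde_binomial p 𝔽 hmp a ha G
    intro i
    exact hsum ⟨(i : ℕ), lt_of_lt_of_le i.2 hmp⟩ i.2
  apply hf
  ext g
  by_contra hg
  have hx : Multiplicative.toAdd g ∈ A := hsupp _ (by simpa using hg)
  obtain ⟨j, hj⟩ := e.surjective ⟨Multiplicative.toAdd g, hx⟩
  have : G j = f.coeff g := by
    show f.coeff (Multiplicative.ofAdd ((e j : ZMod p))) = f.coeff g
    rw [hj]
    rfl
  rw [hG0] at this
  simp only [MonoidAlgebra.coeff_zero, Finsupp.coe_zero, Pi.zero_apply] at hg ⊢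
  exact hg this.symm

end

/-- If `𝔽` has characteristic `p` and `A ⊆ ℤ/pℤ` has `m ≥ 1` elements, then the
uncertainty number `u_𝔽(A) = min{rank T_f : 0 ≠ f ∈ 𝔽[ℤ/pℤ], supp(f) ⊆ A}`
equals `p - m + 1`, where `T_f` is multiplication by `f` on the group algebra. -/
theorem uncertainty_number_char_p (p m : ℕ) (hp : p.Prime) [NeZero p]
    (𝔽 : Type) [Field 𝔽] [CharP 𝔽 p]
    (A : Finset (ZMod p)) (hA : A.card = m) (hm : 1 ≤ m) :
    sInf {r : ℕ | ∃ f : MonoidAlgebra 𝔽 (Multiplicative (ZMod p)), f ≠ 0 ∧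
        (∀ x : ZMod p, f.coeff (Multiplicative.ofAdd x) ≠ 0 → x ∈ A) ∧
        r = Module.finrank 𝔽 (LinearMap.range (LinearMap.mulLeft 𝔽 f))} =
      p - m + 1 := by
  classical
  haveI : Fact p.Prime := ⟨hp⟩
  have hmp : m ≤ p := by
    rw [← hA]
    calc A.card ≤ Fintype.card (ZMod p) := A.card_le_univ
    _ = p := ZMod.card p
  have key : ∀ f : MonoidAlgebra 𝔽 (Multiplicative (ZMod p)), f ≠ 0 →
      (∀ x : ZMod p, f.coeff (Multiplicative.ofAdd x) ≠ 0 → x ∈ A) →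
      ∃ v, v < m ∧ cc p 𝔽 (Cb p 𝔽) f v ≠ 0 ∧
        Module.finrank 𝔽 (LinearMap.range (LinearMap.mulLeft 𝔽 f)) = p - v := by
    intro f hf hsupp
    obtain ⟨v, hvp, hv, hlow, u, hu, hfu⟩ :=
      factor p 𝔽 (tE p 𝔽) (Cb p 𝔽) (Cb_apply p 𝔽) (tE_pow_p p 𝔽) f hf
    obtain ⟨i, him, hi⟩ := exists_small p 𝔽 A hA f hf hsupp
    have hvm : v < m := by
      rcases lt_or_ge v m with h | h
      · exact h
      · exact absurd (hlow i (lt_of_lt_of_le him h)) hi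
    refine ⟨v, hvm, hv, ?_⟩
    have hsurj : LinearMap.range (LinearMap.mulLeft 𝔽 u) = ⊤ := by
      rw [LinearMap.range_eq_top]
      intro y
      refine ⟨(hu.unit⁻¹ : _) * y, ?_⟩
      rw [LinearMap.mulLeft_apply, ← mul_assoc, IsUnit.mul_val_inv, one_mul]
    have hrange : LinearMap.range (LinearMap.mulLeft 𝔽 f)
        = LinearMap.range (LinearMap.mulLeft 𝔽 (tE p 𝔽 ^ v)) := by
      rw [hfu, LinearMap.mulLeft_mul, LinearMap.range_comp_of_range_eq_top _ hsurj]
    rw [hrange, range_mulLeft_pow p 𝔽 (tE p 𝔽) (Cb p 𝔽) (Cb_apply p 𝔽) (tE_pow_p p 𝔽) v,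
      finrank_span_tail p 𝔽 (Cb p 𝔽) v hvp.le]
  set S := {r : ℕ | ∃ f : MonoidAlgebra 𝔽 (Multiplicative (ZMod p)), f ≠ 0 ∧
      (∀ x : ZMod p, f.coeff (Multiplicative.ofAdd x) ≠ 0 → x ∈ A) ∧
      r = Module.finrank 𝔽 (LinearMap.range (LinearMap.mulLeft 𝔽 f))} with hS
  -- membership
  set s : Finset (Multiplicative (ZMod p)) := A.image (Multiplicative.ofAdd) with hs
  set W := Submodule.span 𝔽 ((Bb p 𝔽) '' (s : Set (Multiplicative (ZMod p)))) with hW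
  set U := Submodule.span 𝔽 ((Cb p 𝔽) '' {i : Fin p | m - 1 ≤ (i : ℕ)}) with hU
  have hWrank : Module.finrank 𝔽 W = m := by
    have hli : LinearIndependent 𝔽
        (fun j : (s : Set (Multiplicative (ZMod p))) => Bb p 𝔽 j.1) :=
      (Bb p 𝔽).linearIndependent.comp _ Subtype.val_injective
    have hcard : Fintype.card ((s : Set (Multiplicative (ZMod p)))) = m := by
      rw [show Fintype.card ((s : Set (Multiplicative (ZMod p)))) = s.card from by simp, hs,
        Finset.card_image_of_injective _ (fun x y h => by simpa using h), hA]
    rw [hW, Set.image_eq_range, finrank_span_eq_card hli, hcard]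
  have hUrank : Module.finrank 𝔽 U = p - (m - 1) :=
    finrank_span_tail p 𝔽 (Cb p 𝔽) (m - 1) (by omega)
  have hinf : 1 ≤ Module.finrank 𝔽 (W ⊓ U :
      Submodule 𝔽 (MonoidAlgebra 𝔽 (Multiplicative (ZMod p)))) := by
    have h1 := Submodule.finrank_sup_add_finrank_inf_eq W U
    have h2 : Module.finrank 𝔽 (W ⊔ U :
        Submodule 𝔽 (MonoidAlgebra 𝔽 (Multiplicative (ZMod p)))) ≤ p := by
      exact le_trans (Submodule.finrank_le _) (le_of_eq (finrank_R p 𝔽))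
    omega
  obtain ⟨f, hfWU, hf0⟩ : ∃ f, f ∈ W ⊓ U ∧ f ≠ 0 := by
    apply Submodule.exists_mem_ne_zero_of_ne_bot
    intro hbot
    rw [hbot, finrank_bot] at hinf
    omega
  have hfW : f ∈ W := hfWU.1
  have hfU : f ∈ U := hfWU.2
  have hrepr : (Bb p 𝔽).repr f = f.coeff := rfl
  have hsupp : ∀ x : ZMod p, f.coeff (Multiplicative.ofAdd x) ≠ 0 → x ∈ A := by
    intro x hx
    have hmem := (Module.Basis.mem_span_image (b := Bb p 𝔽)).1 hfW
    have hxs : Multiplicative.ofAdd x ∈ s := by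
      have : Multiplicative.ofAdd x ∈ ((Bb p 𝔽).repr f).support := by
        rw [hrepr]
        exact Finsupp.mem_support_iff.2 hx
      exact hmem this
    rw [hs, Finset.mem_image] at hxs
    obtain ⟨y, hy, hxy⟩ := hxs
    have : y = x := by simpa using hxy
    rwa [← this]
  obtain ⟨v, hvm, hv, hrank⟩ := key f hf0 hsupp
  have hvge : m - 1 ≤ v := by
    have hmem := (Module.Basis.mem_span_image (b := Cb p 𝔽)).1 hfU
    have hvp' : v < p := lt_of_lt_of_le hvm hmp
    have : (⟨v, hvp'⟩ : Fin p) ∈ ((Cb p 𝔽).repr f).support := by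
      rw [Finsupp.mem_support_iff]
      have := hv
      rw [cc, dif_pos hvp'] at this
      exact this
    exact hmem this
  have hveq : v = m - 1 := by omega
  have hmemS : p - m + 1 ∈ S := by
    refine ⟨f, hf0, hsupp, ?_⟩
    rw [hrank, hveq]
    omega
  have hlb : ∀ r ∈ S, p - m + 1 ≤ r := by
    rintro r ⟨g, hg0, hgsupp, rfl⟩
    obtain ⟨w, hwm, _, hwrank⟩ := key g hg0 hgsupp
    rw [hwrank]
    omega
  exact IsLeast.csInf_eq ⟨hmemS, hlb⟩
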